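/- arXiv:1811.12910 — 7 statements merged into one kernel-verified Lean document; each statement's English description precedes it below -/
import Mathlib

section
/- Let 0 < α < 1, let g : [0,T] → ℝ be twice continuously differentiable, and let 0 = t_0 < t_1 < … < t_N = T be a partition with τ_n = t_n − t_{n−1}. Then for every n with 1 ≤ n ≤ N, the quantity (R_2)^n = ∫_{t_{n−1}}^{t_n} ( g(s) − (g(t_{n−1}) + g(t_n))/2 ) (t_n − s)^{α−1} ds satisfies |(R_2)^n| ≤ (τ_n^{1+α})/(2α) · max_{t_{n−1}≤t≤t_n} |g′(t)|. -/
open MeasureTheory Finset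

/-- Bound on the quadrature error `(R_2)^n` on the last subinterval, containing the weak
singularity: `|(R_2)^n| ≤ τ_n^{1+α}/(2α) · max_{t_{n-1} ≤ t ≤ t_n} |g'(t)|`. -/
theorem quadrature_error_last_interval
    (α T : ℝ) (hα0 : 0 < α) (hα1 : α < 1) (hT : 0 < T)
    (g g' g'' : ℝ → ℝ)
    (hg' : ∀ t ∈ Set.Icc (0 : ℝ) T, HasDerivAt g (g' t) t)
    (hg'' : ∀ t ∈ Set.Icc (0 : ℝ) T, HasDerivAt g' (g'' t) t)
    (hg''c : ContinuousOn g'' (Set.Icc (0 : ℝ) T))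
    (N : ℕ) (hN : 1 ≤ N) (t : ℕ → ℝ)
    (ht0 : t 0 = 0) (htN : t N = T)
    (htmono : ∀ k < N, t k < t (k + 1))
    (n : ℕ) (hn1 : 1 ≤ n) (hnN : n ≤ N) :
    |∫ s in t (n - 1)..t n,
        (g s - (g (t (n - 1)) + g (t n)) / 2) * (t n - s) ^ (α - 1)| ≤
      (t n - t (n - 1)) ^ (1 + α) / (2 * α) *
        sSup ((fun s => |g' s|) '' Set.Icc (t (n - 1)) (t n)) := by
  -- monotonicity of the partition
  have hmono : ∀ j, j ≤ N → ∀ i, i ≤ j → t i ≤ t j := by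
    intro j
    induction j with
    | zero => intro _ i hi; simp [Nat.le_zero.mp hi]
    | succ m ih =>
      intro hjN i hi
      rcases Nat.eq_or_lt_of_le hi with h | h
      · rw [h]
      · exact le_trans (ih (le_trans (Nat.le_succ m) hjN) i (Nat.lt_succ_iff.mp h))
          (le_of_lt (htmono m (Nat.lt_of_succ_le hjN)))
  set a := t (n - 1) with ha
  set b := t n with hb
  have hab : a < b := by
    have := htmono (n - 1) (lt_of_lt_of_le (Nat.sub_lt hn1 one_pos) hnN)
    rwa [Nat.sub_add_cancel hn1] at this
  have hsub : Set.Icc a b ⊆ Set.Icc (0 : ℝ) T := by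
    intro x hx
    constructor
    · calc (0 : ℝ) = t 0 := ht0.symm
        _ ≤ a := hmono (n - 1) (le_trans (Nat.sub_le n 1) hnN) 0 (Nat.zero_le _)
        _ ≤ x := hx.1
    · calc x ≤ b := hx.2
        _ ≤ t N := hmono N le_rfl n hnN
        _ = T := htN
  set M := sSup ((fun s => |g' s|) '' Set.Icc a b) with hM
  -- continuity of g'
  have hg'cont : ContinuousOn g' (Set.Icc a b) := fun x hx =>
    ((hg'' x (hsub hx)).continuousAt).continuousWithinAt
  have hKb : BddAbove ((fun s => |g' s|) '' Set.Icc a b) :=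
    isCompact_Icc.bddAbove_image (continuous_abs.comp_continuousOn hg'cont)
  have hle : ∀ x ∈ Set.Icc a b, |g' x| ≤ M := fun x hx =>
    le_csSup hKb ⟨x, hx, rfl⟩
  have hM0 : 0 ≤ M := le_trans (abs_nonneg _) (hle a ⟨le_rfl, le_of_lt hab⟩)
  -- mean value bound
  have hmvt : ∀ x ∈ Set.Icc a b, ∀ y ∈ Set.Icc a b, |g y - g x| ≤ M * |y - x| := by
    intro x hx y hy
    have := Convex.norm_image_sub_le_of_norm_hasDerivWithin_le
      (f := g) (f' := g') (s := Set.Icc a b) (C := M)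
      (fun z hz => (hg' z (hsub hz)).hasDerivWithinAt)
      (fun z hz => by simpa using hle z hz) (convex_Icc a b) hx hy
    simpa using this
  -- pointwise bound on the integrand
  have hpt : ∀ s ∈ Set.Icc a b,
      |(g s - (g a + g b) / 2) * (b - s) ^ (α - 1)| ≤
        M * (b - a) / 2 * (b - s) ^ (α - 1) := by
    intro s hs
    have h1 : |g s - g a| ≤ M * (s - a) := by
      have := hmvt a ⟨le_rfl, le_of_lt hab⟩ s hs
      rwa [abs_of_nonneg (sub_nonneg.mpr hs.1)] at this
    have h2 : |g s - g b| ≤ M * (b - s) := by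
      have := hmvt b ⟨le_of_lt hab, le_rfl⟩ s hs
      rwa [abs_of_nonpos (sub_nonpos.mpr hs.2), neg_sub] at this
    have hgs : |g s - (g a + g b) / 2| ≤ M * (b - a) / 2 := by
      have : g s - (g a + g b) / 2 = ((g s - g a) + (g s - g b)) / 2 := by ring
      rw [this, abs_div, abs_two]
      have := abs_add_le (g s - g a) (g s - g b)
      have hsum : |g s - g a| + |g s - g b| ≤ M * (b - a) := by
        have : M * (s - a) + M * (b - s) = M * (b - a) := by ring
        linarith
      linarith
    have hr : (0 : ℝ) ≤ (b - s) ^ (α - 1) :=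
      Real.rpow_nonneg (by linarith [hs.2]) _
    rw [abs_mul, abs_of_nonneg hr]
    exact mul_le_mul_of_nonneg_right hgs hr
  -- integrability
  have hrpow : IntervalIntegrable (fun s => (b - s) ^ (α - 1)) volume a b := by
    have h0 : IntervalIntegrable (fun x : ℝ => x ^ (α - 1)) volume (b - a) (b - b) :=
      intervalIntegral.intervalIntegrable_rpow' (by linarith)
    simpa using h0.comp_sub_left b
  have hgc : ContinuousOn (fun s => g s - (g a + g b) / 2) (Set.uIcc a b) := by
    rw [Set.uIcc_of_le (le_of_lt hab)]
    have hgcont : ContinuousOn g (Set.Icc a b) := fun x hx =>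
      ((hg' x (hsub hx)).continuousAt).continuousWithinAt
    exact hgcont.sub continuousOn_const
  have hint : IntervalIntegrable
      (fun s => (g s - (g a + g b) / 2) * (b - s) ^ (α - 1)) volume a b :=
    hrpow.continuousOn_mul hgc
  -- the main estimate
  have key : |∫ s in a..b, (g s - (g a + g b) / 2) * (b - s) ^ (α - 1)| ≤
      ∫ s in a..b, M * (b - a) / 2 * (b - s) ^ (α - 1) := by
    refine le_trans (intervalIntegral.abs_integral_le_integral_abs (le_of_lt hab)) ?_
    exact intervalIntegral.integral_mono_on (le_of_lt hab) hint.abs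
      (hrpow.const_mul _) hpt
  -- compute the right-hand integral
  have hcomp : ∫ s in a..b, (b - s) ^ (α - 1) = (b - a) ^ α / α := by
    rw [show (fun s => (b - s) ^ (α - 1)) = (fun s => (fun x : ℝ => x ^ (α - 1)) (b - s))
      from rfl, intervalIntegral.integral_comp_sub_left (fun x : ℝ => x ^ (α - 1)) b,
      integral_rpow (Or.inl (by linarith))]
    rw [sub_self, sub_add_cancel, Real.zero_rpow (ne_of_gt hα0)]
    ring
  have hconst : ∫ s in a..b, M * (b - a) / 2 * (b - s) ^ (α - 1) =
      M * (b - a) / 2 * ((b - a) ^ α / α) := by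
    rw [intervalIntegral.integral_const_mul, hcomp]
  rw [hconst] at key
  refine le_trans key (le_of_eq ?_)
  have hba : (0 : ℝ) < b - a := by linarith
  rw [Real.rpow_add hba, Real.rpow_one]
  field_simp
end

section
/- Let h > 0, let x be a real number, and let g : [x − h, x + h] → ℝ be six times continuously differentiable. Define ξ(s) = 5(1 − s)^3 − 3(1 − s)^5. Then (g″(x + h) + 10 g″(x) + g″(x − h))/12 = (g(x + h) − 2 g(x) + g(x − h))/h² + (h⁴/360) ∫_0^1 ξ(s) [ g⁽⁶⁾(x − s h) + g⁽⁶⁾(x + s h) ] ds. -/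
open MeasureTheory

open Set intervalIntegral
open scoped Nat

/-- Taylor's theorem with integral remainder on a closed interval. -/
theorem taylor_integral_remainder' {f : ℝ → ℝ} {a b : ℝ} (hab : a < b) {n : ℕ}
    (hf : ContDiffOn ℝ (n + 1) f (Icc a b)) {x₀ x : ℝ}
    (hx₀ : x₀ ∈ Icc a b) (hx : x ∈ Icc a b) :
    f x = taylorWithinEval f n (Icc a b) x₀ x +
      ∫ t in x₀..x, ((n ! : ℝ)⁻¹ * (x - t) ^ n) • iteratedDerivWithin (n + 1) f (Icc a b) t := by
  have hu : UniqueDiffOn ℝ (Icc a b) := uniqueDiffOn_Icc hab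
  have hD : ContinuousOn (iteratedDerivWithin (n + 1) f (Icc a b)) (Icc a b) :=
    hf.continuousOn_iteratedDerivWithin le_rfl hu
  have hfn : ContDiffOn ℝ n f (Icc a b) := hf.of_le (by exact_mod_cast Nat.le_succ n)
  have hf' : DifferentiableOn ℝ (iteratedDerivWithin n f (Icc a b)) (Icc a b) :=
    hf.differentiableOn_iteratedDerivWithin (by exact_mod_cast Nat.lt_succ_self n) hu
  have hsub : uIcc x₀ x ⊆ Icc a b := uIcc_subset_Icc hx₀ hx
  have hcont : ContinuousOn (fun t => taylorWithinEval f n (Icc a b) t x) (uIcc x₀ x) :=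
    (continuousOn_taylorWithinEval hu hfn).mono hsub
  have hderiv : ∀ t ∈ Ioo (min x₀ x) (max x₀ x),
      HasDerivWithinAt (fun t => taylorWithinEval f n (Icc a b) t x)
        (((n ! : ℝ)⁻¹ * (x - t) ^ n) • iteratedDerivWithin (n + 1) f (Icc a b) t) (Ioi t) t := by
    intro t ht
    have ht' : t ∈ Ioo a b := by
      constructor
      · exact lt_of_le_of_lt (le_min hx₀.1 hx.1) ht.1
      · exact lt_of_lt_of_le ht.2 (max_le hx₀.2 hx.2)
    exact ((hasDerivWithinAt_taylorWithinEval_at_Icc x hab (Ioo_subset_Icc_self ht') hfn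
      hf').hasDerivAt (Icc_mem_nhds ht'.1 ht'.2)).hasDerivWithinAt
  have hint : IntervalIntegrable
      (fun t => ((n ! : ℝ)⁻¹ * (x - t) ^ n) • iteratedDerivWithin (n + 1) f (Icc a b) t)
      volume x₀ x := by
    apply ContinuousOn.intervalIntegrable
    exact (continuousOn_const.mul ((continuousOn_const.sub continuousOn_id).pow n)).smul
      (hD.mono hsub)
  have := integral_eq_sub_of_hasDeriv_right hcont hderiv hint
  rw [this, taylorWithinEval_self]
  ring

/-- Substitution `t = x + s*c` in an interval integral. -/
theorem integral_affine (F : ℝ → ℝ) {c : ℝ} (hc : c ≠ 0) (x : ℝ) :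
    ∫ t in x..(x + c), F t = c * ∫ s in (0:ℝ)..1, F (x + s * c) := by
  have h0 : ∫ s in (0:ℝ)..1, F (x + s * c) = ∫ s in (0:ℝ)..1, F (c * s + x) := by
    apply intervalIntegral.integral_congr
    intro s _
    ring_nf
  have h1 := intervalIntegral.integral_comp_mul_add (a := (0:ℝ)) (b := 1) F hc x
  have h2 : c * 0 + x = x := by ring
  have h3 : c * 1 + x = x + c := by ring
  rw [h2, h3, smul_eq_mul] at h1
  rw [h0, h1]
  field_simp

set_option maxHeartbeats 1000000 in
/-- Fourth-order compact finite-difference identity (Lemma 4.1 of Zhang–Sun–Liao):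
for `g ∈ C^6[x−h, x+h]` and `ξ(s) = 5(1−s)³ − 3(1−s)⁵`,
`(g″(x+h) + 10g″(x) + g″(x−h))/12
  = (g(x+h) − 2g(x) + g(x−h))/h² + (h⁴/360) ∫₀¹ ξ(s)[g⁽⁶⁾(x−sh) + g⁽⁶⁾(x+sh)] ds`. -/
theorem compact_finite_difference_identity
    (h x : ℝ) (hh : 0 < h) (g : ℝ → ℝ)
    (hg : ContDiffOn ℝ 6 g (Set.Icc (x - h) (x + h))) :
    (iteratedDerivWithin 2 g (Set.Icc (x - h) (x + h)) (x + h) +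
        10 * iteratedDerivWithin 2 g (Set.Icc (x - h) (x + h)) x +
        iteratedDerivWithin 2 g (Set.Icc (x - h) (x + h)) (x - h)) / 12 =
      (g (x + h) - 2 * g x + g (x - h)) / h ^ 2 +
        (h ^ 4 / 360) *
          ∫ s in (0 : ℝ)..1,
            (5 * (1 - s) ^ 3 - 3 * (1 - s) ^ 5) *
              (iteratedDerivWithin 6 g (Set.Icc (x - h) (x + h)) (x - s * h) +
                iteratedDerivWithin 6 g (Set.Icc (x - h) (x + h)) (x + s * h)) := by
  have hab : x - h < x + h := by linarith
  set S := Set.Icc (x - h) (x + h) with hSdef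
  have hu : UniqueDiffOn ℝ S := uniqueDiffOn_Icc hab
  have hxS : x ∈ S := ⟨by linarith, by linarith⟩
  have hpS : x + h ∈ S := ⟨by linarith, le_rfl⟩
  have hmS : x - h ∈ S := ⟨le_rfl, by linarith⟩
  set f₂ := derivWithin (derivWithin g S) S with hf₂def
  have hEq : ∀ (k : ℕ), ∀ t ∈ S, iteratedDerivWithin k f₂ S t
      = iteratedDerivWithin (k + 2) g S t := by
    intro k t ht
    rw [show k + 2 = (k + 1) + 1 from rfl,
      iteratedDerivWithin_succ' (f := g) (n := k + 1),
      iteratedDerivWithin_succ' (f := derivWithin g S) (n := k)]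
  have h2eq : ∀ t ∈ S, iteratedDerivWithin 2 g S t = f₂ t := by
    intro t ht
    have := hEq 0 t ht
    simpa using this.symm
  have hf₂ : ContDiffOn ℝ (3 + 1 : ℕ) f₂ S := by
    have h1 : ContDiffOn ℝ 5 (derivWithin g S) S := hg.derivWithin hu (by norm_num)
    have h2 : ContDiffOn ℝ 4 f₂ S := h1.derivWithin hu (by norm_num)
    exact_mod_cast h2
  have hg6 : ContDiffOn ℝ (5 + 1 : ℕ) g S := by exact_mod_cast hg
  -- continuity of the sixth derivative
  have hD6 : ContinuousOn (iteratedDerivWithin 6 g S) S :=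
    hg.continuousOn_iteratedDerivWithin (by norm_num) hu
  -- Taylor expansions
  have E2p := taylor_integral_remainder' hab hf₂ hxS hpS
  have E2m := taylor_integral_remainder' hab hf₂ hxS hmS
  have E1p := taylor_integral_remainder' hab hg6 hxS hpS
  have E1m := taylor_integral_remainder' hab hg6 hxS hmS
  rw [taylor_within_apply] at E2p E2m E1p E1m
  simp only [Finset.sum_range_succ, Finset.sum_range_zero, zero_add, smul_eq_mul,
    Nat.factorial, iteratedDerivWithin_zero] at E2p E2m E1p E1m
  norm_num at E2p E2m E1p E1m
  -- convert the derivatives of f₂ at x into derivatives of g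
  rw [← iteratedDerivWithin_one (f := f₂), hEq 1 x hxS, hEq 2 x hxS, hEq 3 x hxS] at E2p E2m
  norm_num at E2p E2m
  -- subset facts
  have hsubp : uIcc x (x + h) ⊆ S := uIcc_subset_Icc hxS hpS
  have hsubm : uIcc x (x - h) ⊆ S := uIcc_subset_Icc hxS hmS
  -- remainder conversions
  have RP2 : (∫ t in x..(x + h), 1 / 6 * (x + h - t) ^ 3 * iteratedDerivWithin 4 f₂ S t)
      = h ^ 4 / 6 * ∫ s in (0:ℝ)..1, (1 - s) ^ 3 * iteratedDerivWithin 6 g S (x + s * h) := by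
    have e1 : (∫ t in x..(x + h), 1 / 6 * (x + h - t) ^ 3 * iteratedDerivWithin 4 f₂ S t)
        = ∫ t in x..(x + h), 1 / 6 * (x + h - t) ^ 3 * iteratedDerivWithin 6 g S t :=
      integral_congr fun t ht => by rw [hEq 4 t (hsubp ht)]
    have e2 := integral_affine (fun t => 1 / 6 * (x + h - t) ^ 3 * iteratedDerivWithin 6 g S t)
      hh.ne' x
    have e3 : (∫ s in (0:ℝ)..1, 1 / 6 * (x + h - (x + s * h)) ^ 3
          * iteratedDerivWithin 6 g S (x + s * h))
        = ∫ s in (0:ℝ)..1, h ^ 3 / 6 * ((1 - s) ^ 3 * iteratedDerivWithin 6 g S (x + s * h)) :=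
      integral_congr fun s _ => by ring
    rw [e1, e2, e3, intervalIntegral.integral_const_mul]
    ring
  have RM2 : (∫ t in x..(x - h), 1 / 6 * (x - h - t) ^ 3 * iteratedDerivWithin 4 f₂ S t)
      = h ^ 4 / 6 * ∫ s in (0:ℝ)..1, (1 - s) ^ 3 * iteratedDerivWithin 6 g S (x - s * h) := by
    have e1 : (∫ t in x..(x - h), 1 / 6 * (x - h - t) ^ 3 * iteratedDerivWithin 4 f₂ S t)
        = ∫ t in x..(x - h), 1 / 6 * (x - h - t) ^ 3 * iteratedDerivWithin 6 g S t :=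
      integral_congr fun t ht => by rw [hEq 4 t (hsubm ht)]
    have e2 := integral_affine (fun t => 1 / 6 * (x - h - t) ^ 3 * iteratedDerivWithin 6 g S t)
      (neg_ne_zero.mpr hh.ne') x
    rw [show x + -h = x - h from by ring] at e2
    have e3 : (∫ s in (0:ℝ)..1, 1 / 6 * (x - h - (x + s * -h)) ^ 3
          * iteratedDerivWithin 6 g S (x + s * -h))
        = ∫ s in (0:ℝ)..1, (-(h ^ 3) / 6) * ((1 - s) ^ 3 * iteratedDerivWithin 6 g S (x - s * h)) :=
      integral_congr fun s _ => by rw [show x + s * -h = x - s * h from by ring]; ring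
    rw [e1, e2, e3, intervalIntegral.integral_const_mul]
    ring
  have RP1 : (∫ t in x..(x + h), 1 / 120 * (x + h - t) ^ 5 * iteratedDerivWithin 6 g S t)
      = h ^ 6 / 120 * ∫ s in (0:ℝ)..1, (1 - s) ^ 5 * iteratedDerivWithin 6 g S (x + s * h) := by
    have e2 := integral_affine (fun t => 1 / 120 * (x + h - t) ^ 5 * iteratedDerivWithin 6 g S t)
      hh.ne' x
    have e3 : (∫ s in (0:ℝ)..1, 1 / 120 * (x + h - (x + s * h)) ^ 5
          * iteratedDerivWithin 6 g S (x + s * h))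
        = ∫ s in (0:ℝ)..1, h ^ 5 / 120 * ((1 - s) ^ 5 * iteratedDerivWithin 6 g S (x + s * h)) :=
      integral_congr fun s _ => by ring
    rw [e2, e3, intervalIntegral.integral_const_mul]
    ring
  have RM1 : (∫ t in x..(x - h), 1 / 120 * (x - h - t) ^ 5 * iteratedDerivWithin 6 g S t)
      = h ^ 6 / 120 * ∫ s in (0:ℝ)..1, (1 - s) ^ 5 * iteratedDerivWithin 6 g S (x - s * h) := by
    have e2 := integral_affine (fun t => 1 / 120 * (x - h - t) ^ 5 * iteratedDerivWithin 6 g S t)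
      (neg_ne_zero.mpr hh.ne') x
    rw [show x + -h = x - h from by ring] at e2
    have e3 : (∫ s in (0:ℝ)..1, 1 / 120 * (x - h - (x + s * -h)) ^ 5
          * iteratedDerivWithin 6 g S (x + s * -h))
        = ∫ s in (0:ℝ)..1, (-(h ^ 5) / 120) * ((1 - s) ^ 5 * iteratedDerivWithin 6 g S (x - s * h)) :=
      integral_congr fun s _ => by rw [show x + s * -h = x - s * h from by ring]; ring
    rw [e2, e3, intervalIntegral.integral_const_mul]
    ring
  rw [RP2] at E2p
  rw [RM2] at E2m
  rw [RP1] at E1p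
  rw [RM1] at E1m
  -- integrability of the pieces on [0,1]
  have hMp : Set.MapsTo (fun s : ℝ => x + s * h) (uIcc (0:ℝ) 1) S := by
    rw [uIcc_of_le (by norm_num : (0:ℝ) ≤ 1)]
    intro s hs
    simp only [mem_Icc] at hs ⊢
    constructor
    · nlinarith [mul_nonneg hs.1 hh.le]
    · nlinarith [mul_nonneg (sub_nonneg.2 hs.2) hh.le]
  have hMm : Set.MapsTo (fun s : ℝ => x - s * h) (uIcc (0:ℝ) 1) S := by
    rw [uIcc_of_le (by norm_num : (0:ℝ) ≤ 1)]
    intro s hs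
    simp only [mem_Icc] at hs ⊢
    constructor
    · nlinarith [mul_nonneg (sub_nonneg.2 hs.2) hh.le]
    · nlinarith [mul_nonneg hs.1 hh.le]
  have hCp : ContinuousOn (fun s : ℝ => iteratedDerivWithin 6 g S (x + s * h)) (uIcc (0:ℝ) 1) :=
    hD6.comp ((continuous_const.add (continuous_id.mul continuous_const)).continuousOn) hMp
  have hCm : ContinuousOn (fun s : ℝ => iteratedDerivWithin 6 g S (x - s * h)) (uIcc (0:ℝ) 1) :=
    hD6.comp ((continuous_const.sub (continuous_id.mul continuous_const)).continuousOn) hMm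
  have hIAp : IntervalIntegrable
      (fun s : ℝ => (1 - s) ^ 3 * iteratedDerivWithin 6 g S (x + s * h)) volume 0 1 :=
    (((continuousOn_const.sub continuousOn_id).pow 3).mul hCp).intervalIntegrable
  have hIAm : IntervalIntegrable
      (fun s : ℝ => (1 - s) ^ 3 * iteratedDerivWithin 6 g S (x - s * h)) volume 0 1 :=
    (((continuousOn_const.sub continuousOn_id).pow 3).mul hCm).intervalIntegrable
  have hIBp : IntervalIntegrable
      (fun s : ℝ => (1 - s) ^ 5 * iteratedDerivWithin 6 g S (x + s * h)) volume 0 1 :=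
    (((continuousOn_const.sub continuousOn_id).pow 5).mul hCp).intervalIntegrable
  have hIBm : IntervalIntegrable
      (fun s : ℝ => (1 - s) ^ 5 * iteratedDerivWithin 6 g S (x - s * h)) volume 0 1 :=
    (((continuousOn_const.sub continuousOn_id).pow 5).mul hCm).intervalIntegrable
  -- split the goal integral
  have split : (∫ s in (0:ℝ)..1, (5 * (1 - s) ^ 3 - 3 * (1 - s) ^ 5) *
        (iteratedDerivWithin 6 g S (x - s * h) + iteratedDerivWithin 6 g S (x + s * h)))
      = 5 * (∫ s in (0:ℝ)..1, (1 - s) ^ 3 * iteratedDerivWithin 6 g S (x - s * h))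
        + 5 * (∫ s in (0:ℝ)..1, (1 - s) ^ 3 * iteratedDerivWithin 6 g S (x + s * h))
        - (3 * (∫ s in (0:ℝ)..1, (1 - s) ^ 5 * iteratedDerivWithin 6 g S (x - s * h))
          + 3 * (∫ s in (0:ℝ)..1, (1 - s) ^ 5 * iteratedDerivWithin 6 g S (x + s * h))) := by
    have e : (∫ s in (0:ℝ)..1, (5 * (1 - s) ^ 3 - 3 * (1 - s) ^ 5) *
          (iteratedDerivWithin 6 g S (x - s * h) + iteratedDerivWithin 6 g S (x + s * h)))
        = ∫ s in (0:ℝ)..1,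
            ((5 * ((1 - s) ^ 3 * iteratedDerivWithin 6 g S (x - s * h))
              + 5 * ((1 - s) ^ 3 * iteratedDerivWithin 6 g S (x + s * h)))
            - (3 * ((1 - s) ^ 5 * iteratedDerivWithin 6 g S (x - s * h))
              + 3 * ((1 - s) ^ 5 * iteratedDerivWithin 6 g S (x + s * h)))) :=
      integral_congr fun s _ => by ring
    rw [e, integral_sub ((hIAm.const_mul 5).add (hIAp.const_mul 5))
        ((hIBm.const_mul 3).add (hIBp.const_mul 3)),
      integral_add (hIAm.const_mul 5) (hIAp.const_mul 5),
      integral_add (hIBm.const_mul 3) (hIBp.const_mul 3),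
      intervalIntegral.integral_const_mul, intervalIntegral.integral_const_mul, intervalIntegral.integral_const_mul, intervalIntegral.integral_const_mul]
  rw [← hSdef] at E1p E1m
  rw [h2eq x hxS] at E1p E1m
  rw [h2eq (x + h) hpS, h2eq (x - h) hmS, E2p, E2m, E1p, E1m, split, h2eq x hxS]
  have hne : h ≠ 0 := hh.ne'
  field_simp
  ring
end

section
/- Let M ≥ 2 be an integer, h = 1/M, and let v = (v_0, v_1, …, v_M) ∈ ℝ^{M+1} be a grid function with v_0 = v_M = 0. Then ‖v‖_h ≤ (1/√6) ‖δ_x v‖_h, i.e. h Σ_{i=1}^{M−1} v_i² ≤ (1/6) · h Σ_{i=1}^{M} ((v_i − v_{i−1})/h)². -/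
open Finset

lemma gaussR (n : ℕ) : ∑ i ∈ Finset.range n, (i : ℝ) = (n : ℝ) * ((n : ℝ) - 1) / 2 := by
  induction n with
  | zero => simp
  | succ n ih => rw [Finset.sum_range_succ, ih]; push_cast; ring

lemma sumIdR (n : ℕ) :
    ∑ i ∈ Finset.range n, (i : ℝ) * ((n : ℝ) - (i : ℝ)) = (n : ℝ) * ((n : ℝ) ^ 2 - 1) / 6 := by
  induction n with
  | zero => simp
  | succ n ih =>
    have h1 : ∀ i ∈ Finset.range (n + 1),
        (i : ℝ) * (((n + 1 : ℕ) : ℝ) - (i : ℝ)) = (i : ℝ) * ((n : ℝ) - (i : ℝ)) + (i : ℝ) := by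
      intro i _; push_cast; ring
    rw [Finset.sum_congr rfl h1, Finset.sum_add_distrib, Finset.sum_range_succ, ih, gaussR]
    push_cast; ring

lemma teleR (v : ℕ → ℝ) (i : ℕ) :
    ∑ k ∈ Finset.Ioc 0 i, (v k - v (k - 1)) = v i - v 0 := by
  induction i with
  | zero => simp
  | succ i ih =>
    rw [Finset.sum_Ioc_succ_top (Nat.zero_le _), ih]
    simp only [Nat.add_sub_cancel]
    ring

/-- Discrete Poincaré inequality (Lemma 4.2 of Zhang–Sun–Liao): for a grid function `v`
with `v_0 = v_M = 0` and `h = 1/M`,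
`h ∑_{i=1}^{M−1} v_i² ≤ (1/6) h ∑_{i=1}^{M} ((v_i − v_{i−1})/h)²`,
i.e. `‖v‖_h ≤ (1/√6) ‖δ_x v‖_h`. -/
theorem discrete_poincare
    (M : ℕ) (hM : 2 ≤ M) (h : ℝ) (hh : h = 1 / (M : ℝ))
    (v : ℕ → ℝ) (hv0 : v 0 = 0) (hvM : v M = 0) :
    h * ∑ i ∈ Finset.Icc 1 (M - 1), (v i) ^ 2 ≤
      (1 / 6) * (h * ∑ i ∈ Finset.Icc 1 M, ((v i - v (i - 1)) / h) ^ 2) := by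
  have hM0 : (0 : ℝ) < (M : ℝ) := by positivity
  have hhpos : 0 < h := by rw [hh]; positivity
  set d : ℕ → ℝ := fun k => v k - v (k - 1) with hd
  set S : ℝ := ∑ k ∈ Finset.Ioc 0 M, (d k) ^ 2 with hS
  have hSnn : 0 ≤ S := Finset.sum_nonneg fun k _ => sq_nonneg _
  -- per-index bound
  have key : ∀ i ∈ Finset.Icc 1 (M - 1),
      (v i) ^ 2 ≤ (i : ℝ) * ((M : ℝ) - (i : ℝ)) / (M : ℝ) * S := by
    intro i hi
    simp only [Finset.mem_Icc] at hi
    have hiM : i ≤ M := le_trans hi.2 (Nat.sub_le _ _)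
    have h1 : v i = ∑ k ∈ Finset.Ioc 0 i, d k := by
      rw [teleR v i, hv0]; ring
    have hsplit : ∑ k ∈ Finset.Ioc 0 i, d k + ∑ k ∈ Finset.Ioc i M, d k = 0 := by
      rw [Finset.sum_Ioc_consecutive _ (Nat.zero_le i) hiM, teleR v M, hv0, hvM]; ring
    have h2 : v i = -∑ k ∈ Finset.Ioc i M, d k := by rw [h1]; linarith
    have cs1 : (v i) ^ 2 ≤ (i : ℝ) * ∑ k ∈ Finset.Ioc 0 i, (d k) ^ 2 := by
      rw [h1]
      have := sq_sum_le_card_mul_sum_sq (s := Finset.Ioc 0 i) (f := d)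
      simpa [Nat.card_Ioc] using this
    have cs2 : (v i) ^ 2 ≤ ((M : ℝ) - (i : ℝ)) * ∑ k ∈ Finset.Ioc i M, (d k) ^ 2 := by
      have := sq_sum_le_card_mul_sum_sq (s := Finset.Ioc i M) (f := d)
      rw [h2, neg_sq]
      simp only [Nat.card_Ioc] at this
      rw [Nat.cast_sub hiM] at this
      exact this
    have hAB : ∑ k ∈ Finset.Ioc 0 i, (d k) ^ 2 + ∑ k ∈ Finset.Ioc i M, (d k) ^ 2 = S := by
      rw [hS, Finset.sum_Ioc_consecutive _ (Nat.zero_le i) hiM]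
    have hiR : (0 : ℝ) ≤ (i : ℝ) := Nat.cast_nonneg i
    have hMiR : (0 : ℝ) ≤ (M : ℝ) - (i : ℝ) := by
      have := Nat.cast_le (α := ℝ).mpr hiM; linarith
    rw [div_mul_eq_mul_div, le_div_iff₀ hM0, ← hAB]
    nlinarith [mul_le_mul_of_nonneg_left cs1 hMiR, mul_le_mul_of_nonneg_left cs2 hiR]
  -- sum the bound
  have hsum : ∑ i ∈ Finset.Icc 1 (M - 1), (v i) ^ 2 ≤
      (∑ i ∈ Finset.Icc 1 (M - 1), (i : ℝ) * ((M : ℝ) - (i : ℝ))) / (M : ℝ) * S := by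
    calc ∑ i ∈ Finset.Icc 1 (M - 1), (v i) ^ 2
        ≤ ∑ i ∈ Finset.Icc 1 (M - 1), (i : ℝ) * ((M : ℝ) - (i : ℝ)) / (M : ℝ) * S :=
          Finset.sum_le_sum key
      _ = _ := by rw [← Finset.sum_mul, ← Finset.sum_div]
  have hIcc : ∑ i ∈ Finset.Icc 1 (M - 1), (i : ℝ) * ((M : ℝ) - (i : ℝ)) =
      (M : ℝ) * ((M : ℝ) ^ 2 - 1) / 6 := by
    rw [← sumIdR M]
    rw [← Nat.Ico_zero_eq_range, ← Finset.sum_Ico_consecutive _ (Nat.zero_le 1) (by omega : 1 ≤ M)]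
    have h01 : ∑ i ∈ (Finset.Ico 0 1 : Finset ℕ), (i : ℝ) * ((M : ℝ) - (i : ℝ)) = 0 := by simp
    have hIM : (Finset.Ico 1 M : Finset ℕ) = Finset.Icc 1 (M - 1) := by
      rw [← Finset.Ico_add_one_right_eq_Icc]; congr 1; omega
    rw [h01, hIM]; ring
  -- rewrite RHS
  have hRHS : ∑ i ∈ Finset.Icc 1 M, ((v i - v (i - 1)) / h) ^ 2 = S / h ^ 2 := by
    have : Finset.Icc 1 M = Finset.Ioc 0 M := by
      rw [← Finset.Icc_add_one_left_eq_Ioc]; rfl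
    rw [this, hS, Finset.sum_div]
    refine Finset.sum_congr rfl fun k _ => by rw [div_pow]
  rw [hRHS]
  have hT : ∑ i ∈ Finset.Icc 1 (M - 1), (v i) ^ 2 ≤ ((M : ℝ) ^ 2 - 1) / 6 * S := by
    rw [hIcc] at hsum
    calc ∑ i ∈ Finset.Icc 1 (M - 1), (v i) ^ 2 ≤ (M : ℝ) * ((M : ℝ) ^ 2 - 1) / 6 / (M : ℝ) * S :=
          hsum
      _ = ((M : ℝ) ^ 2 - 1) / 6 * S := by field_simp
  have hhM : h * (M : ℝ) = 1 := by rw [hh]; field_simp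
  have hS2 : S / h ^ 2 = (M : ℝ) ^ 2 * S := by
    rw [hh]; field_simp
  rw [hS2]
  have : h * (((M : ℝ) ^ 2 - 1) / 6 * S) ≤ 1 / 6 * (h * ((M : ℝ) ^ 2 * S)) := by
    have hnn : 0 ≤ h * S := by positivity
    nlinarith [hnn]
  calc h * ∑ i ∈ Finset.Icc 1 (M - 1), (v i) ^ 2 ≤ h * (((M : ℝ) ^ 2 - 1) / 6 * S) := by
        exact mul_le_mul_of_nonneg_left hT (le_of_lt hhpos)
    _ ≤ 1 / 6 * (h * ((M : ℝ) ^ 2 * S)) := this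
end

section
/- Let M ≥ 2 be an integer, h = 1/M, and let v, w ∈ ℝ^{M+1} be grid functions with v_0 = v_M = 0 and w_0 = w_M = 0. Then −h Σ_{i=1}^{M−1} (H_h v_i) · (δ_x² w_i) = ⟨v, w⟩_A, where H_h v_i = (v_{i+1} + 10 v_i + v_{i−1})/12, δ_x² w_i = (w_{i+1} − 2 w_i + w_{i−1})/h², and ⟨v, w⟩_A = h Σ_{i=1}^{M} δ_x v_{i−1/2} δ_x w_{i−1/2} − (h³/12) Σ_{i=1}^{M−1} δ_x² v_i · δ_x² w_i. -/
open Finset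

lemma dsbp_key (v w : ℕ → ℝ) (N : ℕ) :
    (∑ i ∈ Finset.Icc 1 N, v i * (w (i + 1) - 2 * w i + w (i - 1)))
      + ∑ i ∈ Finset.Icc 1 (N + 1), (v i - v (i - 1)) * (w i - w (i - 1))
    = v (N + 1) * w (N + 1) - v (N + 1) * w N - v 0 * w 1 + v 0 * w 0 := by
  induction N with
  | zero => simp; ring
  | succ n ih =>
    rw [Finset.sum_Icc_succ_top (by omega : 1 ≤ n + 1),
        Finset.sum_Icc_succ_top (by omega : 1 ≤ n + 1 + 1)]
    simp only [Nat.add_sub_cancel]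
    linear_combination ih

/-- Discrete summation-by-parts identity (Lemma 4.3 of Zhang–Sun–Liao):
`−h ∑_{i=1}^{M−1} (H_h v_i)(δ_x² w_i)
  = h ∑_{i=1}^{M} δ_x v_{i−1/2} δ_x w_{i−1/2} − (h³/12) ∑_{i=1}^{M−1} δ_x² v_i δ_x² w_i`. -/
theorem discrete_summation_by_parts
    (M : ℕ) (hM : 2 ≤ M) (h : ℝ) (hh : h = 1 / (M : ℝ))
    (v w : ℕ → ℝ) (hv0 : v 0 = 0) (hvM : v M = 0) (hw0 : w 0 = 0) (hwM : w M = 0) :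
    -(h * ∑ i ∈ Finset.Icc 1 (M - 1),
        ((v (i + 1) + 10 * v i + v (i - 1)) / 12) *
          ((w (i + 1) - 2 * w i + w (i - 1)) / h ^ 2)) =
      h * (∑ i ∈ Finset.Icc 1 M, ((v i - v (i - 1)) / h) * ((w i - w (i - 1)) / h)) -
        (h ^ 3 / 12) * ∑ i ∈ Finset.Icc 1 (M - 1),
          ((v (i + 1) - 2 * v i + v (i - 1)) / h ^ 2) *
            ((w (i + 1) - 2 * w i + w (i - 1)) / h ^ 2) := by
  have hMpos : (0 : ℝ) < (M : ℝ) := by positivity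
  have hh0 : h ≠ 0 := by rw [hh]; positivity
  obtain ⟨N, rfl⟩ : ∃ N, M = N + 1 := ⟨M - 1, by omega⟩
  simp only [Nat.add_sub_cancel]
  have hkey := dsbp_key v w N
  rw [hv0, hw0, hvM, hwM] at hkey
  simp only [zero_mul, mul_zero, sub_zero, add_zero, zero_sub, neg_zero] at hkey
  -- hkey : S1 + S2 = 0
  have e1 : ∑ i ∈ Finset.Icc 1 N,
      ((v (i + 1) + 10 * v i + v (i - 1)) / 12) *
        ((w (i + 1) - 2 * w i + w (i - 1)) / h ^ 2)
      = (∑ i ∈ Finset.Icc 1 N, v i * (w (i + 1) - 2 * w i + w (i - 1))) / h ^ 2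
        + (∑ i ∈ Finset.Icc 1 N,
            (v (i + 1) - 2 * v i + v (i - 1)) * (w (i + 1) - 2 * w i + w (i - 1)))
          / (12 * h ^ 2) := by
    rw [Finset.sum_div, Finset.sum_div, ← Finset.sum_add_distrib]
    refine Finset.sum_congr rfl fun i _ => by ring
  have e2 : ∑ i ∈ Finset.Icc 1 (N + 1),
      ((v i - v (i - 1)) / h) * ((w i - w (i - 1)) / h)
      = (∑ i ∈ Finset.Icc 1 (N + 1), (v i - v (i - 1)) * (w i - w (i - 1))) / h ^ 2 := by
    rw [Finset.sum_div]
    refine Finset.sum_congr rfl fun i _ => by ring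
  have e3 : ∑ i ∈ Finset.Icc 1 N,
      ((v (i + 1) - 2 * v i + v (i - 1)) / h ^ 2) *
        ((w (i + 1) - 2 * w i + w (i - 1)) / h ^ 2)
      = (∑ i ∈ Finset.Icc 1 N,
          (v (i + 1) - 2 * v i + v (i - 1)) * (w (i + 1) - 2 * w i + w (i - 1))) / h ^ 4 := by
    rw [Finset.sum_div]
    refine Finset.sum_congr rfl fun i _ => by ring
  rw [e1, e2, e3]
  set A := ∑ i ∈ Finset.Icc 1 N, v i * (w (i + 1) - 2 * w i + w (i - 1))
  set B := ∑ i ∈ Finset.Icc 1 N,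
      (v (i + 1) - 2 * v i + v (i - 1)) * (w (i + 1) - 2 * w i + w (i - 1))
  set C := ∑ i ∈ Finset.Icc 1 (N + 1), (v i - v (i - 1)) * (w i - w (i - 1))
  have hA : A = -C := by linarith
  rw [hA]
  field_simp
  ring
end

section
/- Let 0 < α < 1 and λ ≥ 0, and define S : [0,∞) → ℝ by the absolutely convergent series S(t) = Σ_{m=0}^∞ (−λ t^α)^m / Γ(1 + m α) (i.e. S(t) = E_α(−λ t^α)). Then S solves the scalar Volterra integral equation S(t) = 1 − (λ/Γ(α)) ∫_0^t (t − τ)^{α−1} S(τ) dτ for every t ≥ 0. -/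
open MeasureTheory Filter

lemma ml_summable {α c x : ℝ} (hα : 0 < α) (hc : 1 ≤ c) (hx : 0 ≤ x) :
    Summable (fun m : ℕ => x ^ m / Real.Gamma (c + m * α)) := by
  set y := max x 1 with hy
  have hy1 : (1:ℝ) ≤ y := le_max_right _ _
  have hy0 : (0:ℝ) < y := lt_of_lt_of_le one_pos hy1
  set A : ℝ := (2 * y) ^ (2 / α) with hA
  have hA1 : (1:ℝ) ≤ A := by
    apply Real.one_le_rpow (by linarith) (by positivity)
  -- eventually A ^ n ≤ n !
  have h1 : ∀ᶠ (n : ℕ) in atTop, A ^ n ≤ (Nat.factorial n : ℝ) := by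
    have h2 := (FloorSemiring.tendsto_pow_div_factorial_atTop (K := ℝ) A).eventually_le_const
      (by norm_num : (0:ℝ) < 1)
    filter_upwards [h2] with n hn
    have hfac : (0:ℝ) < (Nat.factorial n : ℝ) := by positivity
    calc A ^ n = (A ^ n / Nat.factorial n) * Nat.factorial n := by field_simp
    _ ≤ 1 * Nat.factorial n := by
        apply mul_le_mul_of_nonneg_right _ hfac.le
        exact hn
    _ = Nat.factorial n := one_mul _
  obtain ⟨N, hN⟩ := h1.exists_forall_of_atTop
  -- main eventual bound
  have key : ∀ᶠ (m : ℕ) in atTop, x ^ m / Real.Gamma (c + m * α) ≤ (1/2 : ℝ) ^ m := by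
    have htend : Filter.Tendsto (fun m : ℕ => (m : ℝ) * α) atTop atTop :=
      Tendsto.atTop_mul_const hα tendsto_natCast_atTop_atTop
    have h3 : ∀ᶠ (m : ℕ) in atTop, (2 : ℝ) ≤ (m:ℝ) * α := htend.eventually_ge_atTop 2
    have h4 : ∀ᶠ (m : ℕ) in atTop, (N : ℝ) + 1 ≤ (m:ℝ) * α := htend.eventually_ge_atTop _
    filter_upwards [h3, h4] with m h3 h4
    set n : ℕ := ⌊(m:ℝ) * α⌋₊ with hn
    have hn2 : 2 ≤ (n:ℝ) := by
      have := Nat.le_floor (by exact_mod_cast h3 : ((2:ℕ):ℝ) ≤ (m:ℝ)*α)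
      exact_mod_cast this
    have hnN : N ≤ n := by
      have hc' : ((N+1 : ℕ) : ℝ) ≤ (m:ℝ)*α := by push_cast; linarith
      have := Nat.le_floor hc'
      omega
    have hfloor_le : (n : ℝ) ≤ (m:ℝ) * α := Nat.floor_le (by positivity)
    have hle_floor : (m:ℝ) * α - 1 ≤ (n:ℝ) := by
      have := Nat.lt_floor_add_one ((m:ℝ)*α)
      linarith
    -- Γ(c + mα) ≥ Γ(1 + n) = n !
    have hmono : (Nat.factorial n : ℝ) ≤ Real.Gamma (c + m * α) := by
      rw [← Real.Gamma_nat_eq_factorial]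
      apply (Real.Gamma_strictMonoOn_Ici.monotoneOn) _ _ _
      · simp only [Set.mem_Ici]; push_cast; linarith
      · simp only [Set.mem_Ici]; linarith
      · push_cast; linarith
    -- n ! ≥ A ^ n ≥ A ^ (mα/2) = (2y)^m  (since n ≥ mα - 1 ≥ mα/2)
    have hAn : ((2*y) ^ (m:ℕ) : ℝ) ≤ A ^ n := by
      have e1 : ((2*y) ^ (m:ℕ) : ℝ) = ((2*y) ^ ((m:ℝ)) : ℝ) := by
        rw [← Real.rpow_natCast]
      have e2 : (A ^ n : ℝ) = (2*y) ^ ((2/α) * n) := by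
        rw [← Real.rpow_natCast A n, hA, ← Real.rpow_mul (by positivity)]
      rw [e1, e2]
      apply Real.rpow_le_rpow_of_exponent_le (by linarith)
      rw [div_mul_eq_mul_div, le_div_iff₀ hα]
      nlinarith
    have hΓpos : 0 < Real.Gamma (c + m * α) := Real.Gamma_pos_of_pos (by positivity)
    rw [div_le_iff₀ hΓpos]
    calc x ^ m ≤ y ^ m := pow_le_pow_left₀ hx (le_max_left _ _) m
    _ = (1/2:ℝ)^m * (2*y)^m := by rw [← mul_pow]; ring_nf
    _ ≤ (1/2:ℝ)^m * Real.Gamma (c + m*α) := by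
        apply mul_le_mul_of_nonneg_left _ (by positivity)
        exact hAn.trans ((hN n hnN).trans hmono)
  -- conclude summability
  apply summable_of_isBigO_nat (summable_geometric_of_lt_one (by norm_num) (by norm_num) :
    Summable (fun m : ℕ => (1/2:ℝ)^m))
  apply Asymptotics.IsBigO.of_bound 1
  filter_upwards [key] with m hm
  have hΓpos : 0 < Real.Gamma (c + m * α) := Real.Gamma_pos_of_pos (by positivity)
  rw [Real.norm_eq_abs, Real.norm_eq_abs, abs_of_nonneg (by positivity), abs_of_nonneg (by positivity)]
  linarith

lemma real_beta_integral {a b : ℝ} (ha : 0 < a) (hb : 0 < b) :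
    ∫ x in (0:ℝ)..1, x ^ (a - 1) * (1 - x) ^ (b - 1) =
      Real.Gamma a * Real.Gamma b / Real.Gamma (a + b) := by
  have hab : 0 < a + b := by linarith
  have hΓ : Real.Gamma (a + b) ≠ 0 := (Real.Gamma_pos_of_pos hab).ne'
  have key : Complex.Gamma a * Complex.Gamma b
      = Complex.Gamma (a + b) * Complex.betaIntegral a b :=
    Complex.Gamma_mul_Gamma_eq_betaIntegral (by simpa using ha) (by simpa using hb)
  have hbeta : Complex.betaIntegral a b
      = ((∫ x in (0:ℝ)..1, x ^ (a - 1) * (1 - x) ^ (b - 1) : ℝ) : ℂ) := by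
    rw [Complex.betaIntegral, ← intervalIntegral.integral_ofReal]
    apply intervalIntegral.integral_congr
    intro x hx
    rw [Set.uIcc_of_le (by norm_num : (0:ℝ) ≤ 1)] at hx
    obtain ⟨hx0, hx1⟩ := hx
    push_cast
    rw [Complex.ofReal_cpow hx0, Complex.ofReal_cpow (by linarith)]
    push_cast
    ring
  rw [hbeta] at key
  have : ((Real.Gamma a * Real.Gamma b : ℝ) : ℂ)
      = ((Real.Gamma (a + b) * ∫ x in (0:ℝ)..1, x ^ (a - 1) * (1 - x) ^ (b - 1) : ℝ) : ℂ) := by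
    push_cast
    rw [← Complex.Gamma_ofReal, ← Complex.Gamma_ofReal, ← Complex.Gamma_ofReal]
    push_cast
    exact key
  have h2 := Complex.ofReal_injective this
  field_simp
  linarith [h2]

lemma scaled_beta_integral {t a b : ℝ} (ht : 0 < t) (ha : 0 < a) (hb : 0 < b) :
    ∫ τ in (0:ℝ)..t, (t - τ) ^ (a - 1) * τ ^ (b - 1) =
      Real.Gamma b * Real.Gamma a / Real.Gamma (b + a) * t ^ (a + b - 1) := by
  have hsub := intervalIntegral.integral_comp_mul_right
    (a := (0:ℝ)) (b := 1) (fun τ => (t - τ) ^ (a - 1) * τ ^ (b - 1)) ht.ne'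
  simp only [zero_mul, one_mul, smul_eq_mul] at hsub
  have h2 : (∫ x in (0:ℝ)..1, (t - x * t) ^ (a - 1) * (x * t) ^ (b - 1))
      = t ^ (a - 1) * t ^ (b - 1) *
        ∫ x in (0:ℝ)..1, x ^ (b - 1) * (1 - x) ^ (a - 1) := by
    rw [← intervalIntegral.integral_const_mul]
    apply intervalIntegral.integral_congr
    intro x hx
    rw [Set.uIcc_of_le (by norm_num : (0:ℝ) ≤ 1)] at hx
    obtain ⟨hx0, hx1⟩ := hx
    have e1 : t - x * t = t * (1 - x) := by ring
    have e2 : x * t = t * x := by ring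
    simp only []
    rw [e1, e2, Real.mul_rpow ht.le (by linarith), Real.mul_rpow ht.le hx0]
    ring
  rw [h2, real_beta_integral hb ha] at hsub
  have : (∫ τ in (0:ℝ)..t, (t - τ) ^ (a - 1) * τ ^ (b - 1))
      = t * (t⁻¹ * ∫ τ in (0:ℝ)..t, (t - τ) ^ (a - 1) * τ ^ (b - 1)) := by
    field_simp
  rw [this, ← hsub]
  rw [show a + b - 1 = 1 + (a-1) + (b-1) by ring, Real.rpow_add ht, Real.rpow_add ht,
    Real.rpow_one]
  ring

/-- The Mittag-Leffler function `S(t) = E_α(−λ t^α)`, defined by the absolutely convergent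
series `∑_{m} (−λ t^α)^m / Γ(1 + mα)`, solves the scalar resolvent Volterra equation
`S(t) = 1 − (λ/Γ(α)) ∫₀ᵗ (t−τ)^{α−1} S(τ) dτ` for all `t ≥ 0`. -/
theorem mittag_leffler_solves_resolvent_equation
    (α lam : ℝ) (hα0 : 0 < α) (hα1 : α < 1) (hlam : 0 ≤ lam)
    (S : ℝ → ℝ)
    (hS : ∀ t ≥ (0 : ℝ),
      S t = ∑' m : ℕ, (-lam * t ^ α) ^ m / Real.Gamma (1 + (m : ℝ) * α)) :
    ∀ t ≥ (0 : ℝ),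
      Summable (fun m : ℕ => |(-lam * t ^ α) ^ m / Real.Gamma (1 + (m : ℝ) * α)|) ∧
      S t = 1 - (lam / Real.Gamma α) * ∫ τ in (0 : ℝ)..t, (t - τ) ^ (α - 1) * S τ := by
  have hΓα : 0 < Real.Gamma α := Real.Gamma_pos_of_pos hα0
  have hΓpos : ∀ m : ℕ, 0 < Real.Gamma (1 + (m:ℝ) * α) := fun m =>
    Real.Gamma_pos_of_pos (by positivity)
  have habs : ∀ s : ℝ, 0 ≤ s →
      Summable (fun m : ℕ => |(-lam * s ^ α) ^ m / Real.Gamma (1 + (m : ℝ) * α)|) := by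
    intro s hs
    apply (ml_summable hα0 le_rfl (x := lam * s ^ α) (by positivity)).congr
    intro m
    rw [abs_div, abs_pow, abs_of_pos (hΓpos m)]
    congr 2
    rw [abs_mul, abs_neg, abs_of_nonneg hlam, abs_of_nonneg (Real.rpow_nonneg hs α)]
  intro t ht
  refine ⟨habs t ht, ?_⟩
  rcases eq_or_lt_of_le ht with h0 | htpos
  · -- t = 0
    rw [← h0, intervalIntegral.integral_same, mul_zero, sub_zero, hS 0 le_rfl]
    rw [tsum_eq_single 0]
    · norm_num [Real.Gamma_one]
    · intro m hm
      rw [Real.zero_rpow hα0.ne', mul_zero, zero_pow hm, zero_div]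
  -- t > 0
  set u : ℕ → ℝ := fun m => (-lam * t ^ α) ^ m / Real.Gamma (1 + (m : ℝ) * α) with hu_def
  have hu : Summable u := (habs t ht).of_abs
  set g : ℕ → ℝ → ℝ := fun m τ =>
    (t - τ) ^ (α - 1) * ((-lam * τ ^ α) ^ m / Real.Gamma (1 + (m:ℝ) * α)) with hg_def
  -- continuity of the non-kernel factor
  have hrpow_cont : Continuous fun τ : ℝ => τ ^ α :=
    continuous_iff_continuousAt.2 fun x => Real.continuousAt_rpow_const x α (Or.inr hα0.le)
  have hcont : ∀ m : ℕ, Continuous fun τ : ℝ =>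
      (-lam * τ ^ α) ^ m / Real.Gamma (1 + (m:ℝ) * α) := fun m =>
    ((continuous_const.mul hrpow_cont).pow m).div_const _
  have hker : IntervalIntegrable (fun τ => (t - τ) ^ (α - 1)) volume 0 t := by
    have h1 := intervalIntegral.intervalIntegrable_rpow' (a := 0) (b := t)
      (show (-1:ℝ) < α - 1 by linarith)
    have h2 := h1.comp_sub_left t
    norm_num at h2
    exact h2.symm
  have hInt : ∀ m : ℕ, IntervalIntegrable (g m) volume 0 t := fun m =>
    hker.mul_continuousOn (hcont m).continuousOn
  -- value of each integral
  have hpow_eq : ∀ τ ∈ Set.uIcc (0:ℝ) t, ∀ m : ℕ, (τ ^ α) ^ m = τ ^ ((m:ℝ) * α) := by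
    intro τ hτ m
    rw [Set.uIcc_of_le ht] at hτ
    rw [← Real.rpow_natCast (τ ^ α) m, ← Real.rpow_mul hτ.1, mul_comm]
  have hJ : ∀ m : ℕ, (∫ τ in (0:ℝ)..t, (t - τ) ^ (α - 1) * τ ^ ((m:ℝ) * α))
      = Real.Gamma ((m:ℝ)*α + 1) * Real.Gamma α / Real.Gamma ((m:ℝ)*α + 1 + α)
        * t ^ ((m:ℝ)*α + α) := by
    intro m
    have hb : (0:ℝ) < (m:ℝ)*α + 1 := by positivity
    have := scaled_beta_integral (b := (m:ℝ)*α + 1) htpos hα0 hb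
    simp only [add_sub_cancel_right] at this
    rw [this]
    ring_nf
  have hval : ∀ m : ℕ, (∫ τ in (0:ℝ)..t, g m τ)
      = (-lam)^m / Real.Gamma (1 + (m:ℝ)*α)
        * (Real.Gamma ((m:ℝ)*α + 1) * Real.Gamma α / Real.Gamma ((m:ℝ)*α + 1 + α)
          * t ^ ((m:ℝ)*α + α)) := by
    intro m
    have : (∫ τ in (0:ℝ)..t, g m τ)
        = ∫ τ in (0:ℝ)..t, (-lam)^m / Real.Gamma (1 + (m:ℝ)*α)
            * ((t - τ) ^ (α - 1) * τ ^ ((m:ℝ) * α)) := by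
      apply intervalIntegral.integral_congr
      intro τ hτ
      simp only [hg_def]
      rw [mul_pow, ← hpow_eq τ hτ m]
      ring
    rw [this, intervalIntegral.integral_const_mul, hJ m]
  have hnormval : ∀ m : ℕ, (∫ τ in Set.Ioc (0:ℝ) t, ‖g m τ‖)
      = lam^m / Real.Gamma (1 + (m:ℝ)*α)
        * (Real.Gamma ((m:ℝ)*α + 1) * Real.Gamma α / Real.Gamma ((m:ℝ)*α + 1 + α)
          * t ^ ((m:ℝ)*α + α)) := by
    intro m
    rw [← intervalIntegral.integral_of_le ht]
    have : (∫ τ in (0:ℝ)..t, ‖g m τ‖)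
        = ∫ τ in (0:ℝ)..t, lam^m / Real.Gamma (1 + (m:ℝ)*α)
            * ((t - τ) ^ (α - 1) * τ ^ ((m:ℝ) * α)) := by
      apply intervalIntegral.integral_congr
      intro τ hτ
      have hτ' := hτ
      rw [Set.uIcc_of_le ht] at hτ'
      simp only [hg_def, Real.norm_eq_abs]
      rw [abs_mul, abs_div, abs_pow, abs_of_pos (hΓpos m), abs_mul, abs_neg,
        abs_of_nonneg hlam, abs_of_nonneg (Real.rpow_nonneg hτ'.1 α),
        abs_of_nonneg (Real.rpow_nonneg (by linarith [hτ'.2] : (0:ℝ) ≤ t - τ) (α - 1)),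
        mul_pow, ← hpow_eq τ hτ m]
      ring
    rw [this, intervalIntegral.integral_const_mul, hJ m]
  -- summability of norm integrals
  have hΓcan : ∀ m : ℕ, Real.Gamma ((m:ℝ)*α + 1) = Real.Gamma (1 + (m:ℝ)*α) := by
    intro m; ring_nf
  have htα : (0:ℝ) < t ^ α := Real.rpow_pos_of_pos htpos α
  have hnorm_sum : Summable fun m : ℕ => ∫ τ in Set.Ioc (0:ℝ) t, ‖g m τ‖ := by
    have hml := (ml_summable hα0 (show (1:ℝ) ≤ 1 + α by linarith)
      (x := lam * t ^ α) (by positivity)).mul_left (Real.Gamma α * t ^ α)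
    apply hml.congr
    intro m
    rw [hnormval m]
    have hΓm : Real.Gamma (1 + (m:ℝ)*α) ≠ 0 := (hΓpos m).ne'
    rw [hΓcan m]
    have e1 : t ^ ((m:ℝ)*α + α) = (t ^ α)^m * t ^ α := by
      rw [Real.rpow_add htpos, ← Real.rpow_natCast (t ^ α) m, ← Real.rpow_mul ht,
        mul_comm α ((m:ℝ))]
    have e2 : (1:ℝ) + α + (m:ℝ) * α = (m:ℝ)*α + 1 + α := by ring
    rw [e2, e1, mul_pow]
    field_simp
  -- interchange
  have hIntIoc : ∀ m : ℕ, Integrable (g m) (volume.restrict (Set.Ioc (0:ℝ) t)) := fun m =>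
    (hInt m).1
  have hswap := integral_tsum_of_summable_integral_norm hIntIoc hnorm_sum
  -- identify the integrand with (t-τ)^(α-1) * S τ on Ioc
  have hSint : (∫ τ in (0:ℝ)..t, (t - τ) ^ (α - 1) * S τ)
      = ∑' m, ∫ τ in (0:ℝ)..t, g m τ := by
    rw [intervalIntegral.integral_of_le ht]
    have : (∫ τ in Set.Ioc (0:ℝ) t, (t - τ) ^ (α - 1) * S τ)
        = ∫ τ in Set.Ioc (0:ℝ) t, (∑' m, g m τ) := by
      apply setIntegral_congr_fun measurableSet_Ioc
      intro τ hτ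
      simp only [hg_def]
      rw [hS τ hτ.1.le]
      exact (tsum_mul_left).symm
    rw [this, ← hswap]
    congr 1
    funext m
    exact (intervalIntegral.integral_of_le ht).symm
  -- final computation
  rw [hSint]
  have hfin : (∑' m : ℕ, ∫ τ in (0:ℝ)..t, g m τ)
      = Real.Gamma α * ∑' m : ℕ, ((-lam)^m * t ^ ((m:ℝ)*α + α) / Real.Gamma ((m:ℝ)*α + 1 + α)) := by
    rw [← tsum_mul_left]
    congr 1
    funext m
    rw [hval m, hΓcan m]
    field_simp
  rw [hfin]
  have hrw : ∀ m : ℕ, u (m + 1)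
      = -(lam * ((-lam)^m * t ^ ((m:ℝ)*α + α) / Real.Gamma ((m:ℝ)*α + 1 + α))) := by
    intro m
    simp only [hu_def]
    have eΓ : (1:ℝ) + ((m+1:ℕ):ℝ) * α = (m:ℝ)*α + 1 + α := by push_cast; ring
    rw [eΓ]
    have ept : (t ^ α)^(m+1) = t ^ ((m:ℝ)*α + α) := by
      rw [← Real.rpow_natCast (t^α) (m+1), ← Real.rpow_mul ht]
      congr 1
      push_cast
      ring
    rw [mul_pow, pow_succ, ← ept]
    ring
  have hstep : (∑' m : ℕ, u (m+1))
      = -(lam * ∑' m : ℕ, ((-lam)^m * t ^ ((m:ℝ)*α + α) / Real.Gamma ((m:ℝ)*α + 1 + α))) := by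
    rw [← tsum_mul_left, ← tsum_neg]
    exact tsum_congr hrw
  have hSt : S t = u 0 + ∑' m : ℕ, u (m+1) := by
    rw [hS t ht]
    exact Summable.tsum_eq_zero_add hu
  have h0 : u 0 = 1 := by
    simp [hu_def, Real.Gamma_one]
  rw [hSt, h0, hstep]
  field_simp
  ring
end

section
/- Let 0 < α < 1, T > 0, M ≥ 2, N ≥ 1, h = 1/M, and let 0 = t_0 < t_1 < … < t_N = T be a partition, with a_n^n = (t_n − t_{n−1})^α/Γ(α+1). Suppose the grid functions ε^0, ε^1, …, ε^N ∈ ℝ^{M+1} and residuals R^1, …, R^N ∈ ℝ^{M+1} satisfy the error equations: H_h ε^n_i = a_n^n δ_x² ε^n_i + a_n^n R^n_i for all 1 ≤ n ≤ N and 1 ≤ i ≤ M−1, with ε^n_0 = ε^n_M = 0 for 1 ≤ n ≤ N and ε^0_i = 0 for 0 ≤ i ≤ M. Then for every 1 ≤ n ≤ N, ‖ε^n‖_A² ≤ ‖ε^0‖_A² + (T^α/Γ(α+1)) ‖R^n‖_h², and hence ‖ε^n‖_A ≤ √(T^α/Γ(α+1)) · ‖R^n‖_h. -/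
open Finset

/-- Compact grid operator `H_h v_i = (v_{i+1} + 10 v_i + v_{i−1})/12`. -/
noncomputable def Hgrid (v : ℕ → ℝ) (i : ℕ) : ℝ :=
  (v (i + 1) + 10 * v i + v (i - 1)) / 12

/-- Second difference `δ_x² v_i = (v_{i+1} − 2v_i + v_{i−1})/h²`. -/
noncomputable def deltaXX (h : ℝ) (v : ℕ → ℝ) (i : ℕ) : ℝ :=
  (v (i + 1) - 2 * v i + v (i - 1)) / h ^ 2

/-- Squared discrete `A`-norm
`‖v‖_A² = h ∑_{i=1}^{M} (δ_x v_{i−1/2})² − (h³/12) ∑_{i=1}^{M−1} (δ_x² v_i)²`. -/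
noncomputable def normAsq (M : ℕ) (h : ℝ) (v : ℕ → ℝ) : ℝ :=
  h * ∑ i ∈ Finset.Icc 1 M, ((v i - v (i - 1)) / h) ^ 2 -
    (h ^ 3 / 12) * ∑ i ∈ Finset.Icc 1 (M - 1), (deltaXX h v i) ^ 2

/-- Squared discrete `L²` norm `‖w‖_h² = h ∑_{i=1}^{M−1} w_i²`. -/
noncomputable def normhsq (M : ℕ) (h : ℝ) (w : ℕ → ℝ) : ℝ :=
  h * ∑ i ∈ Finset.Icc 1 (M - 1), (w i) ^ 2

lemma icc_range' (K : ℕ) (f : ℕ → ℝ) :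
    ∑ i ∈ Finset.Icc 1 K, f i = ∑ j ∈ Finset.range K, f (j + 1) := by
  have hK : K + 1 - 1 = K := by omega
  rw [← Finset.Ico_add_one_right_eq_Icc, Finset.sum_Ico_eq_sum_range, hK]
  exact Finset.sum_congr rfl (fun j _ => by rw [Nat.add_comm])

lemma tele' (K : ℕ) (e : ℕ → ℝ) :
    ∑ i ∈ Finset.range K,
        (e (i + 1) * (e (i + 2) - 2 * e (i + 1) + e i) + (e (i + 1) - e i) ^ 2)
      = e K * (e (K + 1) - e K) - e 0 * (e 1 - e 0) := by
  rw [← Finset.sum_range_sub (f := fun j => e j * (e (j + 1) - e j)) K]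
  exact Finset.sum_congr rfl (fun i _ => by ring)

lemma sbp' (M : ℕ) (hM : 1 ≤ M) (e : ℕ → ℝ) (h0 : e 0 = 0) (hM0 : e M = 0) :
    ∑ i ∈ Finset.Icc 1 (M - 1), e i * (e (i + 1) - 2 * e i + e (i - 1))
      = - ∑ i ∈ Finset.Icc 1 M, (e i - e (i - 1)) ^ 2 := by
  rw [icc_range', icc_range']
  simp only [Nat.add_sub_cancel]
  have hT := tele' (M - 1) e
  have hsplit : M - 1 + 1 = M := by omega
  rw [hsplit, h0] at hT
  have hR : ∑ j ∈ Finset.range M, (e (j + 1) - e j) ^ 2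
      = ∑ j ∈ Finset.range (M - 1), (e (j + 1) - e j) ^ 2 + (e M - e (M - 1)) ^ 2 := by
    conv_lhs => rw [← hsplit]
    rw [Finset.sum_range_succ, hsplit]
  rw [hR]
  have hsum : ∑ i ∈ Finset.range (M - 1), e (i + 1) * (e (i + 2) - 2 * e (i + 1) + e i)
      + ∑ i ∈ Finset.range (M - 1), (e (i + 1) - e i) ^ 2
      = e (M - 1) * (e M - e (M - 1)) := by
    rw [← Finset.sum_add_distrib, hT]; ring
  rw [hM0] at hsum ⊢
  nlinarith [hsum]

set_option maxHeartbeats 1000000 in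
/-- Convergence estimate from the error equations: if
`H_h ε^n_i = a_n^n δ_x² ε^n_i + a_n^n R^n_i` with homogeneous boundary and initial data,
then `‖ε^n‖_A² ≤ ‖ε^0‖_A² + (T^α/Γ(α+1)) ‖R^n‖_h²` and hence
`‖ε^n‖_A ≤ √(T^α/Γ(α+1)) ‖R^n‖_h`. -/
theorem error_equation_convergence
    (α T : ℝ) (hα0 : 0 < α) (hα1 : α < 1) (hT : 0 < T)
    (M N : ℕ) (hM : 2 ≤ M) (hN : 1 ≤ N) (h : ℝ) (hh : h = 1 / (M : ℝ))
    (t : ℕ → ℝ) (ht0 : t 0 = 0) (htN : t N = T)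
    (htmono : ∀ k < N, t k < t (k + 1))
    (ann : ℕ → ℝ)
    (hann : ∀ n : ℕ, 1 ≤ n → n ≤ N →
      ann n = (t n - t (n - 1)) ^ α / Real.Gamma (α + 1))
    (eps R : ℕ → ℕ → ℝ)
    (herr : ∀ n : ℕ, 1 ≤ n → n ≤ N → ∀ i : ℕ, 1 ≤ i → i ≤ M - 1 →
      Hgrid (eps n) i = ann n * deltaXX h (eps n) i + ann n * R n i)
    (hbc : ∀ n : ℕ, 1 ≤ n → n ≤ N → eps n 0 = 0 ∧ eps n M = 0)
    (hinit : ∀ i ≤ M, eps 0 i = 0) :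
    ∀ n : ℕ, 1 ≤ n → n ≤ N →
      normAsq M h (eps n) ≤
          normAsq M h (eps 0) + (T ^ α / Real.Gamma (α + 1)) * normhsq M h (R n) ∧
        Real.sqrt (normAsq M h (eps n)) ≤
          Real.sqrt (T ^ α / Real.Gamma (α + 1)) * Real.sqrt (normhsq M h (R n)) := by
  have hMR : (2 : ℝ) ≤ (M : ℝ) := by exact_mod_cast hM
  have hh0 : 0 < h := by rw [hh]; positivity
  have hne : h ≠ 0 := ne_of_gt hh0
  have hΓ : 0 < Real.Gamma (α + 1) := Real.Gamma_pos_of_pos (by linarith)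
  -- monotonicity of the partition
  have hmono : ∀ k l : ℕ, k ≤ l → l ≤ N → t k ≤ t l := by
    intro k l hkl
    induction l, hkl using Nat.le_induction with
    | base => intro _; exact le_refl _
    | succ l hkl ih =>
      intro hlN
      exact le_trans (ih (by omega)) (le_of_lt (htmono l (by omega)))
  -- A-norm of initial error vanishes
  have h0A : normAsq M h (eps 0) = 0 := by
    unfold normAsq
    have h1 : ∑ i ∈ Finset.Icc 1 M, ((eps 0 i - eps 0 (i - 1)) / h) ^ 2 = 0 := by
      apply Finset.sum_eq_zero
      intro i hi
      rw [Finset.mem_Icc] at hi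
      rw [hinit i hi.2, hinit (i - 1) (by omega)]
      simp
    have h2 : ∑ i ∈ Finset.Icc 1 (M - 1), (deltaXX h (eps 0) i) ^ 2 = 0 := by
      apply Finset.sum_eq_zero
      intro i hi
      rw [Finset.mem_Icc] at hi
      unfold deltaXX
      rw [hinit (i + 1) (by omega), hinit i (by omega), hinit (i - 1) (by omega)]
      simp
    rw [h1, h2]; ring
  intro n hn1 hnN
  obtain ⟨he0, heM⟩ := hbc n hn1 hnN
  set e : ℕ → ℝ := eps n with he
  set r : ℕ → ℝ := R n with hr
  set a : ℝ := ann n with ha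
  clear_value e r a
  -- positivity of a and the bound a ≤ T^α/Γ(α+1)
  have hdt : 0 < t n - t (n - 1) := by
    have := htmono (n - 1) (by omega)
    have hn' : n - 1 + 1 = n := by omega
    rw [hn'] at this
    linarith
  have hdtT : t n - t (n - 1) ≤ T := by
    have h1 := hmono 0 (n - 1) (by omega) (by omega)
    have h2 := hmono n N hnN (le_refl _)
    rw [ht0] at h1; rw [htN] at h2; linarith
  have ha0 : 0 ≤ a := by
    rw [ha, hann n hn1 hnN]
    positivity
  have haT : a ≤ T ^ α / Real.Gamma (α + 1) := by
    rw [ha, hann n hn1 hnN]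
    exact (div_le_div_iff_of_pos_right hΓ).mpr (Real.rpow_le_rpow (le_of_lt hdt) hdtT (le_of_lt hα0))
  -- abbreviations for the key sums
  set S1 : ℝ := ∑ i ∈ Finset.Icc 1 (M - 1), (deltaXX h e i) ^ 2 with hS1
  set S2 : ℝ := ∑ i ∈ Finset.Icc 1 (M - 1), r i * deltaXX h e i with hS2
  set S3 : ℝ := ∑ i ∈ Finset.Icc 1 (M - 1), (r i) ^ 2 with hS3
  clear_value S1 S2 S3
  -- pointwise form of the error equation
  have hpt : ∀ i ∈ Finset.Icc 1 (M - 1),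
      e i = (a - h ^ 2 / 12) * deltaXX h e i + a * r i := by
    intro i hi
    rw [Finset.mem_Icc] at hi
    have heq := herr n hn1 hnN i hi.1 hi.2
    rw [← he, ← hr, ← ha] at heq
    unfold Hgrid deltaXX at heq
    unfold deltaXX
    field_simp at heq ⊢
    linear_combination heq
  -- the summation-by-parts sum in terms of S1, S2
  have hsum2 : ∑ i ∈ Finset.Icc 1 (M - 1), e i * (e (i + 1) - 2 * e i + e (i - 1))
      = h ^ 2 * ((a - h ^ 2 / 12) * S1 + a * S2) := by
    have hterm : ∀ i ∈ Finset.Icc 1 (M - 1),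
        e i * (e (i + 1) - 2 * e i + e (i - 1))
          = h ^ 2 * ((a - h ^ 2 / 12) * (deltaXX h e i) ^ 2 + a * (r i * deltaXX h e i)) := by
      intro i hi
      have hp := hpt i hi
      have hX : deltaXX h e i * h ^ 2 = e (i + 1) - 2 * e i + e (i - 1) := by
        unfold deltaXX
        exact div_mul_cancel₀ _ (pow_ne_zero 2 hne)
      calc e i * (e (i + 1) - 2 * e i + e (i - 1))
          = e i * (deltaXX h e i * h ^ 2) := by rw [hX]
        _ = ((a - h ^ 2 / 12) * deltaXX h e i + a * r i) * (deltaXX h e i * h ^ 2) := by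
            rw [hp]
        _ = h ^ 2 * ((a - h ^ 2 / 12) * (deltaXX h e i) ^ 2
              + a * (r i * deltaXX h e i)) := by ring
    rw [Finset.sum_congr rfl hterm, ← Finset.mul_sum]
    congr 1
    rw [hS1, hS2, Finset.mul_sum, Finset.mul_sum, ← Finset.sum_add_distrib]
  have hsumd : ∑ i ∈ Finset.Icc 1 M, ((e i - e (i - 1)) / h) ^ 2
      = (∑ i ∈ Finset.Icc 1 M, (e i - e (i - 1)) ^ 2) / h ^ 2 := by
    rw [Finset.sum_div]
    exact Finset.sum_congr rfl (fun i _ => div_pow _ _ _)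
  have hd2 : ∑ i ∈ Finset.Icc 1 M, (e i - e (i - 1)) ^ 2
      = -(h ^ 2 * ((a - h ^ 2 / 12) * S1 + a * S2)) := by
    have := sbp' M (by omega) e he0 heM
    rw [hsum2] at this
    linarith [this]
  -- energy identity
  have keyC : normAsq M h e = -(a * h * S1) - a * h * S2 := by
    unfold normAsq
    rw [hsumd, hd2, ← hS1]
    have hcancel : -(h ^ 2 * ((a - h ^ 2 / 12) * S1 + a * S2)) / h ^ 2
        = -((a - h ^ 2 / 12) * S1 + a * S2) := by
      rw [neg_div, mul_div_cancel_left₀ _ (pow_ne_zero 2 hne)]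
    rw [hcancel]
    ring
  -- quadratic completion
  have hquad : 0 ≤ S1 + S2 + S3 / 4 := by
    have hq : ∑ i ∈ Finset.Icc 1 (M - 1), (deltaXX h e i + r i / 2) ^ 2
        = S1 + S2 + S3 / 4 := by
      rw [hS1, hS2, hS3, Finset.sum_div, ← Finset.sum_add_distrib, ← Finset.sum_add_distrib]
      exact Finset.sum_congr rfl (fun i _ => by ring)
    rw [← hq]
    exact Finset.sum_nonneg (fun i _ => sq_nonneg _)
  have hS3nn : 0 ≤ S3 := by
    rw [hS3]; exact Finset.sum_nonneg (fun i _ => sq_nonneg _)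
  have hnormh : normhsq M h r = h * S3 := by rw [hS3]; rfl
  have hcnn : 0 ≤ T ^ α / Real.Gamma (α + 1) := by positivity
  -- main bound
  have part1 : normAsq M h e ≤ normAsq M h (eps 0)
      + (T ^ α / Real.Gamma (α + 1)) * normhsq M h r := by
    rw [h0A, hnormh, keyC]
    have h1 : -(a * h * S1) - a * h * S2 ≤ a * h * (S3 / 4) := by
      nlinarith [mul_nonneg (mul_nonneg ha0 (le_of_lt hh0)) hquad]
    have h2 : a * h * (S3 / 4) ≤ (T ^ α / Real.Gamma (α + 1)) * (h * S3) := by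
      have hhS3 : 0 ≤ h * S3 := mul_nonneg (le_of_lt hh0) hS3nn
      nlinarith [mul_le_mul_of_nonneg_right haT hhS3,
        mul_nonneg (mul_nonneg ha0 (le_of_lt hh0)) hS3nn]
    linarith
  refine ⟨part1, ?_⟩
  have part1' : normAsq M h e ≤ (T ^ α / Real.Gamma (α + 1)) * normhsq M h r := by
    rw [h0A] at part1; linarith
  calc Real.sqrt (normAsq M h e)
      ≤ Real.sqrt ((T ^ α / Real.Gamma (α + 1)) * normhsq M h r) :=
        Real.sqrt_le_sqrt part1'
    _ = Real.sqrt (T ^ α / Real.Gamma (α + 1)) * Real.sqrt (normhsq M h r) :=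
        Real.sqrt_mul hcnn _
end

section
/- Let M ≥ 2 be an integer, h = 1/M, and let v ∈ ℝ^{M+1} be a grid function with v_0 = v_M = 0. Then (2/3) ‖δ_x v‖_h² ≤ ‖v‖_A² ≤ ‖δ_x v‖_h²; in particular, the norms ‖·‖_A and ‖δ_x ·‖_h are equivalent on the space of grid functions vanishing at the endpoints. -/
open Finset

/-- Equivalence of the norms `‖·‖_A` and `‖δ_x ·‖_h` on grid functions vanishing
at the endpoints: `(2/3) ‖δ_x v‖_h² ≤ ‖v‖_A² ≤ ‖δ_x v‖_h²`. -/
theorem normA_equiv_deltaX_norm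
    (M : ℕ) (hM : 2 ≤ M) (h : ℝ) (hh : h = 1 / (M : ℝ))
    (v : ℕ → ℝ) (hv0 : v 0 = 0) (hvM : v M = 0) :
    (2 / 3) * (h * ∑ i ∈ Finset.Icc 1 M, ((v i - v (i - 1)) / h) ^ 2) ≤
        h * (∑ i ∈ Finset.Icc 1 M, ((v i - v (i - 1)) / h) ^ 2) -
          (h ^ 3 / 12) * ∑ i ∈ Finset.Icc 1 (M - 1),
            ((v (i + 1) - 2 * v i + v (i - 1)) / h ^ 2) ^ 2 ∧
      h * (∑ i ∈ Finset.Icc 1 M, ((v i - v (i - 1)) / h) ^ 2) -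
          (h ^ 3 / 12) * ∑ i ∈ Finset.Icc 1 (M - 1),
            ((v (i + 1) - 2 * v i + v (i - 1)) / h ^ 2) ^ 2 ≤
        h * ∑ i ∈ Finset.Icc 1 M, ((v i - v (i - 1)) / h) ^ 2 := by
  have hMpos : (0 : ℝ) < (M : ℝ) := by
    have : (0 : ℕ) < M := by omega
    exact_mod_cast this
  have hhpos : 0 < h := by rw [hh]; positivity
  have hhne : h ≠ 0 := ne_of_gt hhpos
  set w : ℕ → ℝ := fun i => (v i - v (i - 1)) / h with hwdef
  set S : ℝ := ∑ i ∈ Finset.Icc 1 M, ((v i - v (i - 1)) / h) ^ 2 with hS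
  set T : ℝ := ∑ i ∈ Finset.Icc 1 (M - 1),
      ((v (i + 1) - 2 * v i + v (i - 1)) / h ^ 2) ^ 2 with hT
  have hSnonneg : 0 ≤ S := Finset.sum_nonneg fun i _ => sq_nonneg _
  have hTnonneg : 0 ≤ T := Finset.sum_nonneg fun i _ => sq_nonneg _
  -- pointwise estimate
  have step : ∀ i ∈ Finset.Icc 1 (M - 1),
      h ^ 2 * ((v (i + 1) - 2 * v i + v (i - 1)) / h ^ 2) ^ 2
        ≤ 2 * w (i + 1) ^ 2 + 2 * w i ^ 2 := by
    intro i _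
    have h1 : w (i + 1) = (v (i + 1) - v i) / h := by simp [hwdef]
    have h2 : w i = (v i - v (i - 1)) / h := rfl
    have heq : h ^ 2 * ((v (i + 1) - 2 * v i + v (i - 1)) / h ^ 2) ^ 2
        = (w (i + 1) - w i) ^ 2 := by
      rw [h1, h2]; field_simp; ring
    rw [heq]
    nlinarith [sq_nonneg (w (i + 1) + w i)]
  -- reindexing
  have sum1 : ∑ i ∈ Finset.Icc 1 (M - 1), w (i + 1) ^ 2 ≤ S := by
    have hmap : ∑ i ∈ Finset.Icc 1 (M - 1), w (i + 1) ^ 2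
        = ∑ i ∈ Finset.Icc 2 M, w i ^ 2 := by
      have : Finset.Icc 2 M = (Finset.Icc 1 (M - 1)).map (addRightEmbedding 1) := by
        rw [Finset.map_add_right_Icc]
        congr 1
        omega
      rw [this, Finset.sum_map]
      rfl
    rw [hmap, hS]
    apply Finset.sum_le_sum_of_subset_of_nonneg
    · exact Finset.Icc_subset_Icc (by omega) le_rfl
    · intro i _ _; exact sq_nonneg _
  have sum2 : ∑ i ∈ Finset.Icc 1 (M - 1), w i ^ 2 ≤ S := by
    rw [hS]
    apply Finset.sum_le_sum_of_subset_of_nonneg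
    · exact Finset.Icc_subset_Icc le_rfl (by omega)
    · intro i _ _; exact sq_nonneg _
  -- key estimate
  have key : h ^ 2 * T ≤ 4 * S := by
    have := Finset.sum_le_sum step
    rw [← Finset.mul_sum] at this
    rw [← hT] at this
    have hsum : ∑ i ∈ Finset.Icc 1 (M - 1), (2 * w (i + 1) ^ 2 + 2 * w i ^ 2)
        = 2 * (∑ i ∈ Finset.Icc 1 (M - 1), w (i + 1) ^ 2)
          + 2 * (∑ i ∈ Finset.Icc 1 (M - 1), w i ^ 2) := by
      rw [Finset.sum_add_distrib, Finset.mul_sum, Finset.mul_sum]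
    rw [hsum] at this
    linarith
  constructor
  · nlinarith [mul_pos hhpos hhpos]
  · nlinarith [mul_nonneg (pow_nonneg hhpos.le 3) hTnonneg]
end
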